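/- For every r ∈ ℕ and every real polynomial v in one variable of degree at most r, there exist real numbers a, b with 0 ≤ a ≤ b ≤ 1 and b − a ≥ 1/(2(1 + 2r²)) such that |v(x)| ≥ (1/2) · sup_{t ∈ [0,1]} |v(t)| for every x ∈ [a, b]. -/

import Mathlib

set_option maxHeartbeats 1000000
open Polynomial Real Set

noncomputable def ee (x : ℝ) : ℂ := Complex.exp (x * Complex.I)

lemma ee_mul (a b : ℝ) : ee a * ee b = ee (a + b) := by
  rw [ee, ee, ee, ← Complex.exp_add]; push_cast; ring_nf

lemma ee_pow (a : ℝ) (n : ℕ) : ee a ^ n = ee (n * a) := by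
  rw [ee, ee, ← Complex.exp_nat_mul]; push_cast; ring_nf

lemma ee_ne_zero (a : ℝ) : ee a ≠ 0 := Complex.exp_ne_zero _

lemma ee_inv (a : ℝ) : ee a * ee (-a) = 1 := by rw [ee_mul]; simp [ee]

lemma ee_cos (a : ℝ) : ((Real.cos a : ℝ) : ℂ) = (ee a + ee (-a)) / 2 := by
  rw [Complex.ofReal_cos, Complex.cos]
  simp [ee, Complex.cos]

noncomputable def FF (r : ℕ) (P : Polynomial ℝ) : Polynomial ℂ :=
  ∑ k ∈ Finset.range (r+1),
    C ((P.coeff k : ℂ)) * (C (2⁻¹ : ℂ) * (X^2 + 1))^k * X^(r-k)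

lemma FF_eval (r : ℕ) (P : Polynomial ℝ) (hP : P.natDegree ≤ r) (θ : ℝ) :
    (FF r P).eval (ee θ) = ee θ ^ r * ((P.eval (Real.cos θ) : ℝ) : ℂ) := by
  have h1 : P.eval (Real.cos θ) = ∑ k ∈ Finset.range (r+1), P.coeff k * (Real.cos θ)^k :=
    Polynomial.eval_eq_sum_range' (lt_of_le_of_lt hP (Nat.lt_succ_self r)) _
  rw [h1]
  push_cast
  rw [FF, Polynomial.eval_finset_sum, Finset.mul_sum]
  refine Finset.sum_congr rfl (fun k hk => ?_)
  have hkr : k ≤ r := Nat.lt_succ_iff.mp (Finset.mem_range.mp hk)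
  simp only [eval_mul, eval_pow, eval_add, eval_one, eval_C, eval_X]
  have key : (2⁻¹ : ℂ) * ((ee θ)^2 + 1) = ee θ * ((Real.cos θ : ℝ) : ℂ) := by
    rw [ee_cos]
    linear_combination (-1/2 : ℂ) * ee_inv θ
  rw [key, mul_pow, mul_comm (↑(P.coeff k)) ((ee θ)^k * _), mul_assoc]
  rw [show ee θ ^ r = ee θ ^ k * ee θ ^ (r - k) by rw [← pow_add, Nat.add_sub_cancel' hkr]]
  rw [← Complex.ofReal_cos]
  ring

lemma FF_natDegree (r : ℕ) (P : Polynomial ℝ) : (FF r P).natDegree ≤ 2*r := by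
  apply Polynomial.natDegree_sum_le_of_forall_le
  intro k hk
  have hkr : k ≤ r := Nat.lt_succ_iff.mp (Finset.mem_range.mp hk)
  compute_degree
  omega

/-- the comparison function -/
noncomputable def gg (r : ℕ) (P : Polynomial ℝ) (A ε θ₀ : ℝ) (θ : ℝ) : ℝ :=
  A * Real.cos (r*(θ-θ₀)) - P.eval (Real.cos θ) - ε/2 - (ε/2) * Real.cos (θ-θ₀)

/-- the complex polynomial representing `ee θ ^ r * gg θ` -/
noncomputable def QQ (r : ℕ) (P : Polynomial ℝ) (A ε θ₀ : ℝ) : Polynomial ℂ :=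
  C ((A : ℂ)/2) * (C (ee (-θ₀) ^ r) * X^(2*r) + C (ee θ₀ ^ r)) - FF r P
    - C ((ε : ℂ)/2) * X^r
    - C ((ε : ℂ)/4) * (C (ee (-θ₀)) * X^(r+1) + C (ee θ₀) * X^(r-1))

lemma QQ_natDegree (r : ℕ) (hr : 1 ≤ r) (P : Polynomial ℝ) (A ε θ₀ : ℝ) :
    (QQ r P A ε θ₀).natDegree ≤ 2*r := by
  rw [QQ]
  refine le_trans (natDegree_sub_le _ _) (max_le (le_trans (natDegree_sub_le _ _) (max_le (le_trans (natDegree_sub_le _ _) (max_le ?_ (FF_natDegree r P))) ?_)) ?_)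
  · compute_degree
  · compute_degree; omega
  · compute_degree <;> omega

lemma QQ_eval (r : ℕ) (hr : 1 ≤ r) (P : Polynomial ℝ) (hP : P.natDegree ≤ r) (A ε θ₀ : ℝ) (θ : ℝ) :
    (QQ r P A ε θ₀).eval (ee θ) = ee θ ^ r * ((gg r P A ε θ₀ θ : ℝ) : ℂ) := by
  rw [QQ, gg]
  simp only [eval_sub, eval_mul, eval_add, eval_C, eval_pow, eval_X]
  rw [FF_eval r P hP θ]
  push_cast
  have c1 : Complex.cos (↑r * (↑θ - ↑θ₀)) = ((Real.cos ((r:ℝ)*(θ-θ₀)) : ℝ) : ℂ) := by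
    rw [Complex.ofReal_cos]; norm_cast
  have c2 : Complex.cos ((θ:ℂ) - ↑θ₀) = ((Real.cos (θ-θ₀) : ℝ) : ℂ) := by
    rw [Complex.ofReal_cos]; norm_cast
  rw [c1, c2, ee_cos ((r:ℝ)*(θ-θ₀)), ee_cos (θ-θ₀)]
  have e1 : ee (-θ₀) ^ r * ee θ ^ (2*r) = ee θ ^ r * ee ((r:ℝ)*(θ-θ₀)) := by
    rw [ee_pow, ee_pow, ee_pow, ee_mul, ee_mul]; congr 1; push_cast; ring
  have e2 : (ee θ₀ : ℂ) ^ r = ee θ ^ r * ee (-((r:ℝ)*(θ-θ₀))) := by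
    rw [ee_pow, ee_pow, ee_mul]; congr 1; push_cast; ring
  have e3 : ee (-θ₀) * ee θ ^ (r+1) = ee θ ^ r * ee (θ-θ₀) := by
    rw [ee_pow, ee_pow, ee_mul, ee_mul]; congr 1; push_cast; ring
  have e4 : ee θ₀ * ee θ ^ (r-1) = ee θ ^ r * ee (-(θ-θ₀)) := by
    rw [ee_pow, ee_pow, ee_mul, ee_mul]; congr 1
    rw [Nat.cast_sub hr]; push_cast; ring
  rw [e1, e2, e3, e4]
  ring

lemma ee_inj {a b : ℝ} (h : |a - b| < 2*π) (he : ee a = ee b) : a = b := by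
  rw [ee, ee, Complex.exp_eq_exp_iff_exists_int] at he
  obtain ⟨n, hn⟩ := he
  have h2 : (a : ℂ) - b - n * (2*π) = 0 := by
    have hI : (Complex.I : ℂ) ≠ 0 := Complex.I_ne_zero
    have := mul_right_cancel₀ hI (by linear_combination hn : (a:ℂ) * Complex.I = (↑b + ↑n * (2 * ↑π)) * Complex.I)
    linear_combination this
  have h3 : a - b - n * (2*π) = 0 := by exact_mod_cast h2
  have hn0 : n = 0 := by
    by_contra hne
    have h4 : (1:ℝ) ≤ |(n:ℝ)| := by exact_mod_cast Int.one_le_abs (by omega)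
    have hpi : 0 < π := Real.pi_pos
    have h5 : |a - b| = |(n:ℝ)| * (2*π) := by
      rw [show a - b = (n:ℝ)*(2*π) by linarith, abs_mul, abs_of_pos (show (0:ℝ) < 2*π by linarith)]
    nlinarith
  rw [hn0] at h3; push_cast at h3; linarith

lemma cos_lt_one_of (x : ℝ) (h1 : 0 < x) (h2 : x < 2*π) : Real.cos x < 1 := by
  rcases lt_or_eq_of_le (Real.cos_le_one x) with h | h
  · exact h
  · exfalso
    have := (Real.cos_eq_one_iff_of_lt_of_lt (by linarith [Real.pi_pos]) h2).mp h
    linarith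

lemma lemA (r : ℕ) (hr : 1 ≤ r) (P : Polynomial ℝ) (hP : P.natDegree ≤ r) (M : ℝ)
    (hM : ∀ θ : ℝ, |P.eval (Real.cos θ)| ≤ M) (θ₀ : ℝ) (hmax : P.eval (Real.cos θ₀) = M)
    (s : ℝ) (hs0 : 0 ≤ s) (hs1 : s ≤ π/(3*r)) :
    M * Real.cos (r*s) ≤ P.eval (Real.cos (θ₀+s)) := by
  by_contra hcon
  push_neg at hcon
  have hpi : 0 < π := Real.pi_pos
  have hr1 : (1:ℝ) ≤ r := by exact_mod_cast hr
  have hrpos : (0:ℝ) < r := by linarith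
  -- s > 0
  have hspos : 0 < s := by
    rcases eq_or_lt_of_le hs0 with h | h
    · exfalso; rw [← h] at hcon; simp [hmax] at hcon
    · exact h
  set G : ℝ := M * Real.cos (r*s) - P.eval (Real.cos (θ₀+s)) with hG
  have hGpos : 0 < G := by rw [hG]; linarith
  set ε : ℝ := G/4 with hε
  have hεpos : 0 < ε := by rw [hε]; linarith
  set A : ℝ := M + ε with hA
  set g : ℝ → ℝ := gg r P A ε θ₀ with hgdef
  have hgcont : Continuous g := by
    rw [hgdef]; unfold gg; fun_prop
  have hfle : ∀ θ : ℝ, -M ≤ P.eval (Real.cos θ) ∧ P.eval (Real.cos θ) ≤ M :=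
    fun θ => abs_le.mp (hM θ)
  -- g θ₀ = 0
  have hg0 : g θ₀ = 0 := by
    rw [hgdef]; unfold gg
    rw [show (r:ℝ)*(θ₀-θ₀) = 0 by ring, show θ₀ - θ₀ = (0:ℝ) by ring, Real.cos_zero, hmax, hA]
    ring
  -- g (θ₀ + s) > 0
  have hgψ : 0 < g (θ₀ + s) := by
    rw [hgdef]; unfold gg
    have e1 : (r:ℝ) * (θ₀ + s - θ₀) = r * s := by ring
    have e2 : (θ₀ + s - θ₀) = s := by ring
    rw [e1, e2]
    have c1 := Real.neg_one_le_cos (r*s)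
    have c2 := Real.cos_le_one (r*s)
    have c3 := Real.neg_one_le_cos s
    have c4 := Real.cos_le_one s
    have : A * Real.cos (r*s) - P.eval (Real.cos (θ₀+s)) = G + ε * Real.cos (r*s) := by
      rw [hA, hG]; ring
    nlinarith
  -- step points
  set t : ℕ → ℝ := fun k => θ₀ + k * π / r with ht
  have htmono : ∀ j k : ℕ, j ≤ k → t j ≤ t k := by
    intro j k hjk; simp only [ht]
    have h1 : (j:ℝ) ≤ k := by exact_mod_cast hjk
    have h2 : (0:ℝ) ≤ π/(r:ℝ) := by positivity
    have h3 := mul_le_mul_of_nonneg_right h1 h2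
    have e : ∀ m : ℕ, (m:ℝ) * π / r = m * (π/r) := fun m => by ring
    rw [e j, e k]; linarith
  -- sign at odd k
  have hodd : ∀ k : ℕ, Odd k → g (t k) < 0 := by
    intro k hk
    rw [hgdef, ht]; unfold gg
    have e1 : (r:ℝ) * (θ₀ + k * π / r - θ₀) = k * π := by field_simp; ring
    rw [e1]
    have e2 : Real.cos (k * π) = (-1)^k := by simpa using Real.cos_add_nat_mul_pi 0 k
    rw [e2, hk.neg_one_pow]
    have := (hfle (θ₀ + k * π / r)).1
    have c3 := Real.neg_one_le_cos (θ₀ + ↑k * π / r - θ₀)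
    have c4 := Real.cos_le_one (θ₀ + ↑k * π / r - θ₀)
    rw [hA]; nlinarith
  -- sign at even k, 1 ≤ k ≤ 2r-1
  have heven : ∀ k : ℕ, Even k → 1 ≤ k → k ≤ 2*r - 1 → 0 < g (t k) := by
    intro k hk hk1 hk2
    rw [hgdef, ht]; unfold gg
    have e1 : (r:ℝ) * (θ₀ + k * π / r - θ₀) = k * π := by field_simp; ring
    rw [e1]
    have e2 : Real.cos (k * π) = (-1)^k := by simpa using Real.cos_add_nat_mul_pi 0 k
    rw [e2, hk.neg_one_pow]
    have e3 : (θ₀ + ↑k * π / r - θ₀) = k * π / r := by ring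
    rw [e3]
    have hklt : (k:ℝ) < 2*r := by
      have : k < 2*r := by omega
      exact_mod_cast this
    have hkge : (1:ℝ) ≤ (k:ℝ) := by exact_mod_cast hk1
    have hcos : Real.cos (k * π / r) < 1 := by
      apply cos_lt_one_of
      · positivity
      · rw [div_lt_iff₀ hrpos]; nlinarith
    have := (hfle (θ₀ + k * π / r)).2
    rw [hA]; nlinarith
  -- the complex polynomial
  set Q : Polynomial ℂ := QQ r P A ε θ₀ with hQdef
  have hQev : ∀ θ : ℝ, Q.eval (ee θ) = ee θ ^ r * ((g θ : ℝ) : ℂ) :=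
    fun θ => QQ_eval r hr P hP A ε θ₀ θ
  have hQne : Q ≠ 0 := by
    intro h
    have h1 := hQev (t 1)
    rw [h] at h1
    simp only [eval_zero] at h1
    have h2 : ((g (t 1) : ℝ) : ℂ) = 0 := by
      rcases mul_eq_zero.mp h1.symm with h3 | h3
      · exact absurd h3 (pow_ne_zero _ (ee_ne_zero _))
      · exact h3
    have h4 : g (t 1) = 0 := by exact_mod_cast h2
    have := hodd 1 odd_one
    linarith
  -- root at ee θ₀ with multiplicity ≥ 2
  have hroot0 : Q.eval (ee θ₀) = 0 := by rw [hQev θ₀, hg0]; simp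
  have hee : ∀ θ : ℝ, HasDerivAt ee (ee θ * Complex.I) θ := by
    intro θ
    have h1 : HasDerivAt (fun y : ℝ => ((y : ℝ) : ℂ)) ((1:ℝ) : ℂ) θ :=
      (hasDerivAt_id θ).ofReal_comp
    have h3 := (h1.mul_const Complex.I).cexp
    simp at h3; exact h3
  have hQder : HasDerivAt (fun θ : ℝ => Q.eval (ee θ))
      (Q.derivative.eval (ee θ₀) * (ee θ₀ * Complex.I)) θ₀ :=
    (Polynomial.hasDerivAt Q (ee θ₀)).comp θ₀ (hee θ₀)
  have hfd : HasDerivAt (fun θ : ℝ => P.eval (Real.cos θ))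
      (P.derivative.eval (Real.cos θ₀) * (-Real.sin θ₀)) θ₀ :=
    (Polynomial.hasDerivAt P (Real.cos θ₀)).comp θ₀ (Real.hasDerivAt_cos θ₀)
  have hfd0 : P.derivative.eval (Real.cos θ₀) * (-Real.sin θ₀) = 0 := by
    have hloc : IsLocalMax (fun θ : ℝ => P.eval (Real.cos θ)) θ₀ :=
      Filter.Eventually.of_forall (fun θ => by
        show P.eval (Real.cos θ) ≤ P.eval (Real.cos θ₀)
        rw [hmax]; exact (hfle θ).2)
    exact hloc.hasDerivAt_eq_zero hfd
  have hgder : HasDerivAt g 0 θ₀ := by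
    have haff : HasDerivAt (fun θ : ℝ => (r:ℝ)*(θ - θ₀)) ((r:ℝ)*1) θ₀ :=
      ((hasDerivAt_id θ₀).sub_const θ₀).const_mul (r:ℝ)
    have hc1 : HasDerivAt (fun θ : ℝ => Real.cos ((r:ℝ)*(θ - θ₀)))
        (-Real.sin ((r:ℝ)*(θ₀ - θ₀)) * ((r:ℝ)*1)) θ₀ :=
      (Real.hasDerivAt_cos _).comp θ₀ haff
    have haff2 : HasDerivAt (fun θ : ℝ => θ - θ₀) 1 θ₀ := (hasDerivAt_id θ₀).sub_const θ₀
    have hc2 : HasDerivAt (fun θ : ℝ => Real.cos (θ - θ₀)) (-Real.sin (θ₀ - θ₀) * 1) θ₀ :=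
      (Real.hasDerivAt_cos _).comp θ₀ haff2
    have hcomb := (((hc1.const_mul A).sub hfd).sub_const (ε/2)).sub (hc2.const_mul (ε/2))
    have h0 : A * (-Real.sin ((r:ℝ)*(θ₀-θ₀)) * ((r:ℝ)*1)) -
        P.derivative.eval (Real.cos θ₀) * (-Real.sin θ₀) - ε/2 * (-Real.sin (θ₀-θ₀) * 1) = 0 := by
      rw [show (r:ℝ)*(θ₀-θ₀) = 0 by ring, show θ₀-θ₀ = (0:ℝ) by ring, Real.sin_zero, hfd0]
      ring
    rw [hgdef]; unfold gg
    exact h0 ▸ hcomb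
  have hgd0 : HasDerivAt (fun θ : ℝ => Q.eval (ee θ)) 0 θ₀ := by
    have h2 : HasDerivAt (fun θ : ℝ => ee ((r:ℝ) * θ)) (ee ((r:ℝ)*θ₀) * (((r:ℝ):ℂ) * Complex.I)) θ₀ := by
      have ha : HasDerivAt (fun θ : ℝ => (r:ℝ) * θ) ((r:ℝ)*1) θ₀ := (hasDerivAt_id θ₀).const_mul (r:ℝ)
      have hb : HasDerivAt (fun θ : ℝ => (((r:ℝ) * θ : ℝ) : ℂ)) (((r:ℝ)*1 : ℝ) : ℂ) θ₀ := ha.ofReal_comp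
      have hc := (hb.mul_const Complex.I).cexp
      simpa [ee] using hc
    have h3 : HasDerivAt (fun θ : ℝ => ((g θ : ℝ) : ℂ)) (((0:ℝ):ℂ)) θ₀ := hgder.ofReal_comp
    have h4 := h2.mul h3
    have h5 : HasDerivAt (fun θ : ℝ => ee ((r:ℝ)*θ) * ((g θ : ℝ):ℂ)) 0 θ₀ := by
      have : ee ((r:ℝ)*θ₀) * (((r:ℝ):ℂ) * Complex.I) * ((g θ₀ :ℝ):ℂ) + ee ((r:ℝ)*θ₀) * ((0:ℝ):ℂ) = 0 := by
        rw [hg0]; simp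
      exact this ▸ h4
    have h6 : (fun θ : ℝ => Q.eval (ee θ)) = fun θ : ℝ => ee ((r:ℝ)*θ) * ((g θ :ℝ):ℂ) := by
      funext θ; rw [hQev θ, ee_pow]
    rw [h6]
    exact h5
  have hder0 : Q.derivative.eval (ee θ₀) = 0 := by
    have h1 := hQder.unique hgd0
    rcases mul_eq_zero.mp h1 with h2 | h2
    · exact h2
    · exact absurd h2 (mul_ne_zero (ee_ne_zero _) Complex.I_ne_zero)
  have hdvd2 : (X - C (ee θ₀))^2 ∣ Q := by
    obtain ⟨R, hR⟩ := (Polynomial.dvd_iff_isRoot (p := Q)).mpr hroot0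
    have hRroot : R.eval (ee θ₀) = 0 := by
      have hdQ := congrArg (fun p : Polynomial ℂ => p.derivative.eval (ee θ₀)) hR
      simp only [derivative_mul, derivative_sub, derivative_X, derivative_C, sub_zero,
        eval_add, eval_mul, eval_sub, eval_X, eval_C, sub_self, one_mul, zero_mul, mul_zero] at hdQ
      rw [hder0] at hdQ
      simpa using hdQ.symm
    obtain ⟨S, hS⟩ := (Polynomial.dvd_iff_isRoot (p := R)).mpr hRroot
    exact ⟨S, by rw [hR, hS]; ring⟩
  -- the intermediate zeros
  have hπr : 0 < π / (r:ℝ) := by positivity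
  have htlt : ∀ k : ℕ, t k < t (k+1) := by
    intro k
    simp only [ht]
    have : ((k:ℝ)+1) * π / r = k * π / r + π / r := by ring
    push_cast
    rw [this]
    linarith
  set lo : ℕ → ℝ := fun k => if k = 0 then θ₀ + s else t k with hlo
  have hzeros : ∀ k : Fin (2*r-1), ∃ ζ, ζ ∈ Set.Ioo (lo k.val) (t (k.val+1)) ∧ g ζ = 0 := by
    intro ⟨kv, hkv⟩
    simp only
    rcases Nat.eq_zero_or_pos kv with h0 | h1
    · subst h0
      simp only [hlo, if_pos rfl]
      have hab : θ₀ + s ≤ t 1 := by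
        simp only [ht]
        have h9 : s ≤ π / r :=
          le_trans hs1 (div_le_div_of_nonneg_left hpi.le hrpos (by linarith))
        push_cast; rw [one_mul]; linarith
      have h01 : (0:ℝ) ∈ Set.Ioo (g (t 1)) (g (θ₀ + s)) := ⟨hodd 1 odd_one, hgψ⟩
      obtain ⟨ζ, hζ, hζ0⟩ := intermediate_value_Ioo' hab hgcont.continuousOn h01
      exact ⟨ζ, hζ, hζ0⟩
    · have hne : kv ≠ 0 := by omega
      simp only [hlo, if_neg hne]
      have hab : t kv ≤ t (kv+1) := (htlt kv).le
      rcases Nat.even_or_odd kv with hpar | hpar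
      · have hs1' : 0 < g (t kv) := heven kv hpar (by omega) (by omega)
        have hs2' : g (t (kv+1)) < 0 := hodd (kv+1) (Even.add_one hpar)
        have h01 : (0:ℝ) ∈ Set.Ioo (g (t (kv+1))) (g (t kv)) := ⟨hs2', hs1'⟩
        obtain ⟨ζ, hζ, hζ0⟩ := intermediate_value_Ioo' hab hgcont.continuousOn h01
        exact ⟨ζ, hζ, hζ0⟩
      · have hs1' : g (t kv) < 0 := hodd kv hpar
        have hs2' : 0 < g (t (kv+1)) := heven (kv+1) (Odd.add_one hpar) (by omega) (by omega)
        have h01 : (0:ℝ) ∈ Set.Ioo (g (t kv)) (g (t (kv+1))) := ⟨hs1', hs2'⟩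
        obtain ⟨ζ, hζ, hζ0⟩ := intermediate_value_Ioo hab hgcont.continuousOn h01
        exact ⟨ζ, hζ, hζ0⟩
  choose ζ hζmem hζ0 using hzeros
  have hζlow : ∀ k : Fin (2*r-1), θ₀ < ζ k := by
    intro k
    have h1 := (hζmem k).1
    rcases Nat.eq_zero_or_pos k.val with h0 | hkp
    · rw [h0] at h1; simp only [hlo, if_pos rfl] at h1; linarith
    · have hne : k.val ≠ 0 := by omega
      simp only [hlo, if_neg hne, ht] at h1
      have : (0:ℝ) < k.val * π / r := by
        have : (1:ℝ) ≤ (k.val : ℝ) := by exact_mod_cast hkp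
        positivity
      linarith
  have hζhigh : ∀ k : Fin (2*r-1), ζ k < θ₀ + 2*π := by
    intro k
    have h1 := (hζmem k).2
    have h2 : t (k.val+1) ≤ t (2*r-1) := htmono _ _ (by omega)
    have h3 : t (2*r-1) < θ₀ + 2*π := by
      simp only [ht]
      have hc : ((2*r-1 : ℕ):ℝ) = 2*(r:ℝ) - 1 := by
        push_cast [Nat.cast_sub (by omega : 1 ≤ 2*r)]; ring
      rw [hc]
      have : (2*(r:ℝ)-1) * π / r < 2*π := by
        rw [div_lt_iff₀ hrpos]; nlinarith
      linarith
    linarith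
  have hζmono : ∀ j k : Fin (2*r-1), j < k → ζ j < ζ k := by
    intro j k hjk
    have h1 := (hζmem j).2
    have h2 := (hζmem k).1
    have hkne : k.val ≠ 0 := by
      have := Fin.lt_iff_val_lt_val.mp hjk; omega
    simp only [hlo, if_neg hkne] at h2
    have h3 : t (j.val + 1) ≤ t k.val := htmono _ _ (by
      have := Fin.lt_iff_val_lt_val.mp hjk; omega)
    linarith
  set w : Fin (2*r-1) → ℂ := fun k => ee (ζ k) with hw
  have hwne : ∀ k, w k ≠ ee θ₀ := by
    intro k heq
    have h1 : |ζ k - θ₀| < 2*π := by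
      rw [abs_of_pos (by linarith [hζlow k])]
      linarith [hζhigh k]
    have := ee_inj h1 heq
    linarith [hζlow k]
  have hwinj : Function.Injective w := by
    intro j k heq
    by_contra hne
    rcases Ne.lt_or_gt hne with h | h
    · have := hζmono j k h
      have h1 : |ζ j - ζ k| < 2*π := by
        rw [abs_of_neg (by linarith)]
        have := hζlow j; have := hζhigh k; have := hζlow k; have := hζhigh j
        linarith
      have := ee_inj h1 heq
      linarith
    · have := hζmono k j h
      have h1 : |ζ j - ζ k| < 2*π := by
        rw [abs_of_pos (by linarith)]
        have := hζlow j; have := hζhigh k; have := hζlow k; have := hζhigh j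
        linarith
      have := ee_inj h1 heq
      linarith
  have hwroot : ∀ k, Q.eval (w k) = 0 := by
    intro k
    rw [hw]
    simp only
    rw [hQev (ζ k), hζ0 k]
    simp
  classical
  set m : Multiset ℂ := (ee θ₀) ::ₘ (ee θ₀) ::ₘ (Multiset.map w Finset.univ.val) with hm
  have hmle : m ≤ Q.roots := by
    rw [Multiset.le_iff_count]
    intro a
    by_cases ha : a = ee θ₀
    · have hnotmem : a ∉ Multiset.map w Finset.univ.val := by
        intro hmem
        obtain ⟨k, _, hk⟩ := Multiset.mem_map.mp hmem
        rw [ha] at hk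
        exact hwne k hk
      have h1 : Multiset.count a m = 2 := by
        rw [hm, ha]
        rw [show ((ee θ₀) ::ₘ (ee θ₀) ::ₘ (Multiset.map w Finset.univ.val)) =
          (ee θ₀) ::ₘ ((ee θ₀) ::ₘ (Multiset.map w Finset.univ.val)) from rfl]
        rw [Multiset.count_cons_self, Multiset.count_cons_self,
          Multiset.count_eq_zero.mpr (ha ▸ hnotmem)]
      rw [h1, ha, Polynomial.count_roots]
      exact (Polynomial.le_rootMultiplicity_iff hQne).mpr hdvd2
    · have h2 : Multiset.count a m = Multiset.count a (Multiset.map w Finset.univ.val) := by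
        rw [hm, Multiset.count_cons_of_ne ha, Multiset.count_cons_of_ne ha]
      by_cases hb : ∃ k, w k = a
      · obtain ⟨k, hk⟩ := hb
        rw [h2, ← hk, Multiset.count_map_eq_count' w _ hwinj]
        have h3 : Multiset.count k Finset.univ.val = 1 :=
          Multiset.count_eq_one_of_mem Finset.univ.nodup (Finset.mem_univ k)
        rw [h3, Polynomial.count_roots]
        have h4 : Q.IsRoot (w k) := hwroot k
        exact (Polynomial.rootMultiplicity_pos hQne).mpr h4
      · rw [h2, Multiset.count_eq_zero.mpr]
        · exact Nat.zero_le _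
        · intro hmem
          obtain ⟨k, _, hk⟩ := Multiset.mem_map.mp hmem
          exact hb ⟨k, hk⟩
  have hcardm : Multiset.card m = 2*r + 1 := by
    rw [hm]
    simp only [Multiset.card_cons, Multiset.card_map]
    have hcv : Multiset.card (Finset.univ.val : Multiset (Fin (2*r-1))) = 2*r-1 := by
      simp
    omega
  have h10 := Multiset.card_le_card hmle
  have h11 := Polynomial.card_roots' Q
  have h12 : Q.natDegree ≤ 2*r := QQ_natDegree r hr P A ε θ₀
  omega

lemma arccos_le_arccos' {x y : ℝ} (hx : -1 ≤ x) (hxy : x ≤ y) :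
    Real.arccos y ≤ Real.arccos x := by
  rw [Real.arccos, Real.arccos]
  have := Real.monotone_arcsin hxy
  linarith

/-- the numeric inequality -/
lemma lemC (r : ℕ) (hr : 1 ≤ r) :
    1 / (2*(1+2*(r:ℝ)^2)) ≤ Real.sin (π/(6*r))^2 := by
  have hu1 : (1:ℝ) ≤ (r:ℝ) := by exact_mod_cast hr
  have hπ1 : 3.141592 < π := Real.pi_gt_d6
  have hπ2 : π < 3.15 := Real.pi_lt_d2
  have hπ0 : 0 < π := Real.pi_pos
  set u : ℝ := (r:ℝ) with hu
  have hupos : 0 < u := by linarith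
  set t : ℝ := π/(6*u) with htdef
  have ht0 : 0 < t := by positivity
  have htu : 6*u*t = π := by rw [htdef]; field_simp
  have ht1 : t ≤ 1 := by
    rw [htdef, div_le_one (by positivity)]
    nlinarith
  have hs : t - t^3/4 < Real.sin t := by
    have := Real.sin_gt_sub_cube ht0; nlinarith [pow_pos ht0 3]
  have hA : 36*u^2*t^2 ≤ 9.9225 := by nlinarith
  have hB : 9.8696 ≤ 36*u^2*t^2 := by nlinarith
  have ht2 : t^2 ≤ 0.2757 := by nlinarith [sq_nonneg t, sq_nonneg u, sq_nonneg (u*t)]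
  have hSpos : 0 < t - t^3/4 := by nlinarith
  have k1 : (t - t^3/4)^2 ≤ Real.sin t ^ 2 := by nlinarith
  have k2 : t^2 - t^4/2 ≤ (t - t^3/4)^2 := by nlinarith [sq_nonneg (t^3)]
  have k3 : 1 ≤ (t^2 - t^4/2) * (2+4*u^2) := by
    have hh : (0:ℝ) ≤ (9.9225 - 36*u^2*t^2) * t^2 :=
      mul_nonneg (by nlinarith) (sq_nonneg t)
    nlinarith [hh, hB, ht2, sq_nonneg t]
  rw [div_le_iff₀ (by positivity)]
  nlinarith

/-- Lemma B : one-sided version assuming max at x₀ ≤ 1/2 with value +M -/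
lemma lemB (r : ℕ) (hr : 1 ≤ r) (v : Polynomial ℝ) (hv : v.natDegree ≤ r) (M : ℝ)
    (hM : ∀ x ∈ Set.Icc (0:ℝ) 1, |v.eval x| ≤ M) (x₀ : ℝ) (hx₀0 : 0 ≤ x₀)
    (hx₀h : x₀ ≤ 1/2) (hmax : v.eval x₀ = M) :
    ∃ a b : ℝ, 0 ≤ a ∧ a ≤ b ∧ b ≤ 1 ∧ 1/(2*(1+2*(r:ℝ)^2)) ≤ b - a ∧
      ∀ x ∈ Set.Icc a b, M ≤ 2 * |v.eval x| := by
  have hπ0 : 0 < π := Real.pi_pos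
  have hr1 : (1:ℝ) ≤ (r:ℝ) := by exact_mod_cast hr
  have hrpos : (0:ℝ) < r := by linarith
  set P : Polynomial ℝ := v.comp (Polynomial.C (2⁻¹:ℝ) * (1 - Polynomial.X)) with hPdef
  have hPdeg : P.natDegree ≤ r := by
    refine le_trans Polynomial.natDegree_comp_le ?_
    have h1 : (Polynomial.C (2⁻¹:ℝ) * (1 - Polynomial.X)).natDegree ≤ 1 := by compute_degree
    calc v.natDegree * (Polynomial.C (2⁻¹:ℝ) * (1 - Polynomial.X)).natDegree
        ≤ r * 1 := Nat.mul_le_mul hv h1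
      _ = r := by ring
  have hPev : ∀ c : ℝ, P.eval c = v.eval (2⁻¹ * (1 - c)) := by
    intro c; rw [hPdef, Polynomial.eval_comp]; simp
  set θ₀ : ℝ := Real.arccos (1 - 2*x₀) with hθ₀def
  have harg1 : -1 ≤ 1 - 2*x₀ := by linarith
  have harg2 : 1 - 2*x₀ ≤ 1 := by linarith
  have hcosθ₀ : Real.cos θ₀ = 1 - 2*x₀ := Real.cos_arccos harg1 harg2
  have hθ₀0 : 0 ≤ θ₀ := Real.arccos_nonneg _
  have hθ₀π : θ₀ ≤ π := Real.arccos_le_pi _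
  have hθ₀half : θ₀ ≤ π/2 := by
    rw [hθ₀def, Real.arccos, sub_le_iff_le_add]
    have := Real.arcsin_nonneg.mpr (by linarith : (0:ℝ) ≤ 1 - 2*x₀)
    linarith
  have hMP : ∀ θ : ℝ, |P.eval (Real.cos θ)| ≤ M := by
    intro θ
    rw [hPev]
    apply hM
    constructor
    · nlinarith [Real.cos_le_one θ]
    · nlinarith [Real.neg_one_le_cos θ]
  have hmaxP : P.eval (Real.cos θ₀) = M := by
    rw [hPev, hcosθ₀, show 2⁻¹ * (1 - (1-2*x₀)) = x₀ by ring, hmax]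
  set h : ℝ := π/(3*r) with hhdef
  have hh0 : 0 < h := by positivity
  have hhπ : h ≤ π/3 := by
    rw [hhdef]
    apply div_le_div_of_nonneg_left hπ0.le (by linarith)
    linarith
  have hθh : θ₀ + h ≤ π := by
    have : π/2 + π/3 ≤ π := by linarith
    linarith
  set a : ℝ := x₀ with hadef
  set b : ℝ := 2⁻¹ * (1 - Real.cos (θ₀ + h)) with hbdef
  have ha' : a = 2⁻¹ * (1 - Real.cos θ₀) := by rw [hcosθ₀]; ring
  have hab : a ≤ b := by
    rw [ha', hbdef]
    have := Real.cos_le_cos_of_nonneg_of_le_pi hθ₀0 hθh (by linarith)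
    linarith
  have hb1 : b ≤ 1 := by
    rw [hbdef]
    nlinarith [Real.neg_one_le_cos (θ₀ + h)]
  -- length
  have hlen : 1/(2*(1+2*(r:ℝ)^2)) ≤ b - a := by
    have e1 : b - a = 2⁻¹ * (Real.cos θ₀ - Real.cos (θ₀+h)) := by rw [ha', hbdef]; ring
    have e2 : Real.cos θ₀ - Real.cos (θ₀+h) = 2 * Real.sin (θ₀ + h/2) * Real.sin (h/2) := by
      rw [Real.cos_sub_cos]
      rw [show (θ₀ + (θ₀+h))/2 = θ₀ + h/2 by ring, show (θ₀ - (θ₀+h))/2 = -(h/2) by ring,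
        Real.sin_neg]
      ring
    have e3 : Real.sin (h/2) ≤ Real.sin (θ₀ + h/2) := by
      have e4 : Real.sin (θ₀ + h/2) - Real.sin (h/2) =
          2 * Real.sin (θ₀/2) * Real.cos ((θ₀ + h)/2) := by
        rw [Real.sin_sub_sin]
        rw [show (θ₀ + h/2 - h/2)/2 = θ₀/2 by ring, show (θ₀ + h/2 + h/2)/2 = (θ₀+h)/2 by ring]
      have h5 : 0 ≤ Real.sin (θ₀/2) := Real.sin_nonneg_of_nonneg_of_le_pi (by linarith) (by linarith)
      have h6 : 0 ≤ Real.cos ((θ₀+h)/2) := Real.cos_nonneg_of_mem_Icc ⟨by linarith, by linarith⟩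
      nlinarith
    have h7 : 0 ≤ Real.sin (h/2) :=
      Real.sin_nonneg_of_nonneg_of_le_pi (by linarith) (by linarith)
    have h8 : Real.sin (h/2)^2 ≤ b - a := by
      rw [e1, e2]
      nlinarith
    have h9 : Real.sin (h/2)^2 = Real.sin (π/(6*r))^2 := by
      rw [hhdef, show π/(3*(r:ℝ))/2 = π/(6*r) by ring]
    have h10 := lemC r hr
    rw [← h9] at h10
    linarith
  refine ⟨a, b, hx₀0, hab, hb1, hlen, ?_⟩
  intro x hx
  have hx0 : 0 ≤ x := le_trans hx₀0 hx.1
  have hx1 : x ≤ 1 := le_trans hx.2 hb1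
  set θ : ℝ := Real.arccos (1 - 2*x) with hθdef
  have hcosθ : Real.cos θ = 1 - 2*x := Real.cos_arccos (by linarith) (by linarith)
  have hθ1 : θ₀ ≤ θ := by
    rw [hθdef, ← Real.arccos_cos hθ₀0 hθ₀π]
    apply arccos_le_arccos' (by linarith)
    rw [hcosθ₀]
    linarith [hx.1]
  have hθ2 : θ ≤ θ₀ + h := by
    rw [hθdef, ← Real.arccos_cos (by linarith : (0:ℝ) ≤ θ₀ + h) hθh]
    apply arccos_le_arccos' (Real.neg_one_le_cos _)
    have : 1 - 2*x ≥ 1 - 2*b := by linarith [hx.2]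
    calc Real.cos (θ₀ + h) = 1 - 2*b := by rw [hbdef]; ring
      _ ≤ 1 - 2*x := by linarith [hx.2]
  have hs := lemA r hr P hPdeg M hMP θ₀ hmaxP (θ - θ₀) (by linarith) (by linarith)
  rw [show θ₀ + (θ - θ₀) = θ by ring] at hs
  have hcosrs : (1:ℝ)/2 ≤ Real.cos ((r:ℝ) * (θ - θ₀)) := by
    rw [← Real.cos_pi_div_three]
    apply Real.cos_le_cos_of_nonneg_of_le_pi
    · exact mul_nonneg hrpos.le (by linarith)
    · linarith
    · calc (r:ℝ) * (θ - θ₀) ≤ (r:ℝ) * h := by nlinarith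
        _ = π/3 := by rw [hhdef]; field_simp
  have hvx : P.eval (Real.cos θ) = v.eval x := by
    rw [hPev, hcosθ, show 2⁻¹ * (1 - (1-2*x)) = x by ring]
  rw [hvx] at hs
  have habs : v.eval x ≤ |v.eval x| := le_abs_self _
  nlinarith [hM x ⟨hx0, hx1⟩, abs_nonneg (v.eval x)]

lemma lemB2 (r : ℕ) (hr : 1 ≤ r) (w : Polynomial ℝ) (hw : w.natDegree ≤ r) (M : ℝ)
    (hM : ∀ x ∈ Set.Icc (0:ℝ) 1, |w.eval x| ≤ M) (x₀ : ℝ) (hx₀ : x₀ ∈ Set.Icc (0:ℝ) 1)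
    (hmax : w.eval x₀ = M) :
    ∃ a b : ℝ, 0 ≤ a ∧ a ≤ b ∧ b ≤ 1 ∧ 1/(2*(1+2*(r:ℝ)^2)) ≤ b - a ∧
      ∀ x ∈ Set.Icc a b, M ≤ 2 * |w.eval x| := by
  rcases le_or_gt x₀ (1/2) with hside | hside
  · exact lemB r hr w hw M hM x₀ hx₀.1 hside hmax
  · set w' : Polynomial ℝ := w.comp (1 - Polynomial.X) with hw'def
    have hdeg : w'.natDegree ≤ r := by
      refine le_trans Polynomial.natDegree_comp_le ?_
      have h1 : ((1 : Polynomial ℝ) - Polynomial.X).natDegree ≤ 1 := by compute_degree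
      calc w.natDegree * ((1 : Polynomial ℝ) - Polynomial.X).natDegree ≤ r * 1 :=
            Nat.mul_le_mul hw h1
        _ = r := by ring
    have hev : ∀ c : ℝ, w'.eval c = w.eval (1 - c) := by
      intro c; rw [hw'def, Polynomial.eval_comp]; simp
    have hM' : ∀ x ∈ Set.Icc (0:ℝ) 1, |w'.eval x| ≤ M := by
      intro x hx
      rw [hev]
      exact hM _ ⟨by linarith [hx.2], by linarith [hx.1]⟩
    have hmax' : w'.eval (1 - x₀) = M := by
      rw [hev, show 1 - (1 - x₀) = x₀ by ring, hmax]
    obtain ⟨a, b, h1, h2, h3, h4, h5⟩ :=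
      lemB r hr w' hdeg M hM' (1 - x₀) (by linarith [hx₀.2]) (by linarith) hmax'
    refine ⟨1 - b, 1 - a, by linarith, by linarith, by linarith, by linarith, ?_⟩
    intro x hx
    have h6 := h5 (1 - x) ⟨by linarith [hx.2], by linarith [hx.1]⟩
    rw [hev, show 1 - (1 - x) = x by ring] at h6
    exact h6


/-- Lemma 4.2: for every `r ∈ ℕ` and every real polynomial `v` of degree at most `r`,
there is a subinterval `[a,b] ⊆ [0,1]` of length at least `1/(2(1 + 2r²))` on which
`|v| ≥ (1/2) sup_{[0,1]} |v|`. -/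
theorem stmt_5 (r : ℕ) (v : Polynomial ℝ) (hv : v.natDegree ≤ r) :
    ∃ a b : ℝ, 0 ≤ a ∧ a ≤ b ∧ b ≤ 1 ∧
      1 / (2 * (1 + 2 * (r : ℝ) ^ 2)) ≤ b - a ∧
      ∀ x ∈ Set.Icc a b,
        (1 / 2) * sSup ((fun t => |Polynomial.eval t v|) '' Set.Icc (0 : ℝ) 1) ≤
          |Polynomial.eval x v| := by
  set S : Set ℝ := (fun t => |Polynomial.eval t v|) '' Set.Icc (0 : ℝ) 1 with hS
  set M : ℝ := sSup S with hM
  have hne : S.Nonempty := (Set.nonempty_Icc.mpr (by norm_num)).image _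
  have hcomp : IsCompact S := isCompact_Icc.image ((v.continuous_aeval).abs)
  have hbdd : BddAbove S := hcomp.bddAbove
  have hub : ∀ x ∈ Set.Icc (0:ℝ) 1, |v.eval x| ≤ M := fun x hx => le_csSup hbdd ⟨x, hx, rfl⟩
  obtain ⟨x₀, hx₀, hMx₀⟩ := hcomp.sSup_mem hne
  have hδ1 : 1 / (2 * (1 + 2 * (r : ℝ) ^ 2)) ≤ 1 := by
    rw [div_le_one (by positivity)]
    nlinarith [sq_nonneg (r:ℝ)]
  rcases le_or_gt M 0 with hM0 | hMpos
  · refine ⟨0, 1, le_refl 0, by norm_num, le_refl 1, by linarith, ?_⟩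
    intro x _
    have := abs_nonneg (v.eval x)
    nlinarith
  rcases Nat.eq_zero_or_pos r with hr0 | hrpos
  · subst hr0
    have hc := Polynomial.eq_C_of_natDegree_le_zero hv
    refine ⟨0, 1, le_refl 0, by norm_num, le_refl 1, by linarith, ?_⟩
    intro x _
    have h1 : v.eval x = v.coeff 0 := by rw [hc]; simp
    have h2 : v.eval x₀ = v.coeff 0 := by rw [hc]; simp
    have h3 : |Polynomial.eval x₀ v| = M := hMx₀
    have h4 : |Polynomial.eval x v| = M := by rw [h1, ← h2]; exact h3
    linarith
  have habs : v.eval x₀ = M ∨ v.eval x₀ = -M := (abs_eq hMpos.le).mp hMx₀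
  rcases habs with hsgn | hsgn
  · obtain ⟨a, b, h1, h2, h3, h4, h5⟩ := lemB2 r hrpos v hv M hub x₀ hx₀ hsgn
    refine ⟨a, b, h1, h2, h3, h4, ?_⟩
    intro x hx
    have := h5 x hx
    linarith
  · have hdeg' : (-v).natDegree ≤ r := by rw [Polynomial.natDegree_neg]; exact hv
    have hM' : ∀ x ∈ Set.Icc (0:ℝ) 1, |(-v).eval x| ≤ M := by
      intro x hx; rw [Polynomial.eval_neg, abs_neg]; exact hub x hx
    have hmax' : (-v).eval x₀ = M := by rw [Polynomial.eval_neg, hsgn]; ring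
    obtain ⟨a, b, h1, h2, h3, h4, h5⟩ := lemB2 r hrpos (-v) hdeg' M hM' x₀ hx₀ hmax'
    refine ⟨a, b, h1, h2, h3, h4, ?_⟩
    intro x hx
    have h6 := h5 x hx
    rw [Polynomial.eval_neg, abs_neg] at h6
    linarith
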